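/- For every real x > 0 and every real t > 0, the limit lim_{ε→0⁺} (√(ε − it)/(2√π)) ∫₀^∞ e^{(it−ε)(rx + 1/(4r))} r^{-3/2} dr exists and equals e^{it√x}, where √(ε−it) is the principal branch of the complex square root and each integral (for ε > 0) is absolutely convergent. -/

import Mathlib

open MeasureTheory Real Set Complex Filter Topology


private lemma sq_cpow_half' {z : ℂ} (hz : z ≠ 0) :
    z ^ (1/2 : ℂ) * z ^ (1/2 : ℂ) = z := by
  rw [← Complex.cpow_add _ _ hz]; norm_num

private lemma im_lt_re_cpow_half {z : ℂ} (hz : 0 < z.re) :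
    |(z ^ (1/2 : ℂ)).im| < (z ^ (1/2 : ℂ)).re := by
  have hz0 : z ≠ 0 := fun h => by simp [h] at hz
  have harg : |Complex.arg z| < π/2 := Complex.abs_arg_lt_pi_div_two_iff.2 (Or.inl hz)
  rw [Complex.cpow_def_of_ne_zero hz0, Complex.exp_re, Complex.exp_im]
  have him : (Complex.log z * (1/2)).im = Complex.arg z / 2 := by
    simp [Complex.mul_im, Complex.log_im, Complex.log_re]; ring
  rw [him]
  set E := Real.exp ((Complex.log z * (1/2)).re) with hE
  have hEpos : 0 < E := Real.exp_pos _
  rw [abs_mul, abs_of_pos hEpos]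
  have h1 : |Real.sin (Complex.arg z / 2)| < Real.cos (Complex.arg z / 2) := by
    set θ := Complex.arg z / 2 with hθ
    have hθlt : |θ| < π/4 := by rw [hθ, abs_div]; simp [abs_of_pos]; linarith [abs_div (Complex.arg z) 2, harg]
    have hπ : (0:ℝ) < π := Real.pi_pos
    have habs : |Real.sin θ| = Real.sin |θ| := by
      rcases le_or_gt 0 θ with h | h
      · rw [_root_.abs_of_nonneg h, _root_.abs_of_nonneg (Real.sin_nonneg_of_nonneg_of_le_pi h (by cases abs_lt.1 hθlt; linarith))]
      · rw [abs_of_neg h, abs_of_nonpos, ← Real.sin_neg]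
        exact Real.sin_nonpos_of_nonpos_of_neg_pi_le h.le (by cases abs_lt.1 hθlt; linarith)
    rw [habs, ← Real.cos_abs, ← Real.sin_pi_div_two_sub]
    apply Real.strictMonoOn_sin
    · constructor <;> [linarith [abs_nonneg θ]; linarith]
    · constructor <;> [linarith [abs_nonneg θ]; linarith [abs_nonneg θ]]
    · linarith
  calc E * |Real.sin (Complex.arg z / 2)| < E * Real.cos (Complex.arg z / 2) := by
        exact (mul_lt_mul_iff_right₀ hEpos).2 h1
    _ = _ := by ring

private lemma cpow_half_mul {y : ℂ} (hy : 0 < y.re) :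
    y ^ (1/2:ℂ) * ((π : ℂ)/y) ^ (1/2:ℂ) = ((Real.sqrt π : ℝ) : ℂ) := by
  have hy0 : y ≠ 0 := fun h => by simp [h] at hy
  have hπ : (0:ℝ) < π := Real.pi_pos
  have hns : 0 < Complex.normSq y := Complex.normSq_pos.2 hy0
  have hq : 0 < ((π:ℂ)/y).re := by
    rw [Complex.div_re]
    simp only [Complex.ofReal_re, Complex.ofReal_im, zero_mul, zero_div, add_zero]
    positivity
  set u := y ^ (1/2:ℂ) with hu'
  set v := ((π:ℂ)/y) ^ (1/2:ℂ) with hv'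
  have hu := im_lt_re_cpow_half hy
  have hv := im_lt_re_cpow_half hq
  have hwre : 0 < (u*v).re := by
    rw [Complex.mul_re]
    rcases abs_lt.1 hu with ⟨hu1, hu2⟩
    rcases abs_lt.1 hv with ⟨hv1, hv2⟩
    nlinarith
  have hπy : (π:ℂ)/y ≠ 0 := div_ne_zero (by exact_mod_cast hπ.ne') hy0
  have hsq : (u*v)*(u*v) = (π:ℂ) := by
    calc (u*v)*(u*v) = (u*u)*(v*v) := by ring
    _ = y * ((π:ℂ)/y) := by rw [sq_cpow_half' hy0, sq_cpow_half' hπy]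
    _ = π := by field_simp
  have hspos : 0 < Real.sqrt π := Real.sqrt_pos.2 hπ
  have hs : ((Real.sqrt π : ℝ):ℂ) * ((Real.sqrt π : ℝ):ℂ) = (π:ℂ) := by
    rw [← Complex.ofReal_mul, Real.mul_self_sqrt hπ.le]
  have hfac : (u*v - ((Real.sqrt π:ℝ):ℂ)) * (u*v + ((Real.sqrt π:ℝ):ℂ)) = 0 := by
    linear_combination hsq - hs
  rcases mul_eq_zero.1 hfac with h | h
  · exact sub_eq_zero.1 h
  · exfalso
    have h2 : u*v = -((Real.sqrt π:ℝ):ℂ) := eq_neg_of_add_eq_zero_left h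
    rw [h2] at hwre
    simp only [Complex.neg_re, Complex.ofReal_re] at hwre
    linarith

private lemma glasser_deriv {a c : ℝ} (u : ℝ) (hu : u ∈ Ioi (0:ℝ)) :
    HasDerivWithinAt (fun u : ℝ => a*u - c/u) (a + c/u^2) (Ioi 0) u := by
  have hu0 : u ≠ 0 := (mem_Ioi.1 hu).ne'
  have h1 : HasDerivAt (fun u : ℝ => a*u - c/u) (a + c/u^2) u := by
    have h2 := ((hasDerivAt_id u).const_mul a).sub ((hasDerivAt_inv hu0).const_mul c)
    have : a + c/u^2 = a * 1 - c * -(u ^ 2)⁻¹ := by field_simp; ring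
    rw [this]
    exact h2.congr_of_eventuallyEq (Filter.Eventually.of_forall fun v => by simp [div_eq_mul_inv])
  exact h1.hasDerivWithinAt

private lemma glasser_inj {a c : ℝ} (ha : 0 < a) (hc : 0 < c) :
    InjOn (fun u : ℝ => a*u - c/u) (Ioi 0) := by
  have mono : StrictMonoOn (fun u : ℝ => a*u - c/u) (Ioi 0) := by
    intro u hu v hv huv
    have h1 : a*u < a*v := (mul_lt_mul_iff_right₀ ha).2 huv
    have h2 : c/v < c/u := div_lt_div_of_pos_left hc (mem_Ioi.1 hu) huv
    simp only
    linarith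
  exact mono.injOn

private lemma glasser_image {a c : ℝ} (ha : 0 < a) (hc : 0 < c) :
    (fun u : ℝ => a*u - c/u) '' (Ioi 0) = univ := by
  apply eq_univ_of_forall
  intro w
  set s := Real.sqrt (w^2 + 4*a*c) with hs'
  have hs2 : s^2 = w^2 + 4*a*c := Real.sq_sqrt (by nlinarith)
  have hs : |w| < s := by
    rw [← Real.sqrt_sq_eq_abs, hs']
    exact Real.sqrt_lt_sqrt (sq_nonneg w) (by nlinarith)
  have hwabs := abs_lt.1 hs
  have hu0 : 0 < (w + s)/(2*a) := by
    apply div_pos (by linarith) (by linarith)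
  refine ⟨(w + s)/(2*a), mem_Ioi.2 hu0, ?_⟩
  have h2a : (2*a) ≠ 0 := by positivity
  have hws : w + s ≠ 0 := by linarith
  field_simp
  nlinarith [hs2]

private lemma glasser_combined {y : ℂ} (hy : 0 < y.re) {a c : ℝ} (ha : 0 < a) (hc : 0 < c) :
    IntegrableOn (fun u : ℝ => |a + c/u^2| •
        Complex.exp (-y * (((a*u - c/u : ℝ)):ℂ)^2)) (Ioi 0) volume ∧
    ∫ u in Ioi (0:ℝ), |a + c/u^2| • Complex.exp (-y * (((a*u - c/u : ℝ)):ℂ)^2)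
      = ((π:ℂ)/y) ^ (1/2:ℂ) := by
  have hint : Integrable (fun w : ℝ => Complex.exp (-y * (w:ℂ)^2)) :=
    integrable_cexp_neg_mul_sq hy
  have hio : IntegrableOn (fun w : ℝ => Complex.exp (-y * (w:ℂ)^2))
      ((fun u : ℝ => a*u - c/u) '' (Ioi 0)) volume := by
    rw [glasser_image ha hc]; exact hint.integrableOn
  constructor
  · exact (integrableOn_image_iff_integrableOn_abs_deriv_smul measurableSet_Ioi
      (fun u hu => glasser_deriv u hu) (glasser_inj ha hc)
      (fun w : ℝ => Complex.exp (-y * (w:ℂ)^2))).1 hio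
  · rw [← integral_image_eq_integral_abs_deriv_smul measurableSet_Ioi
      (fun u hu => glasser_deriv u hu) (glasser_inj ha hc)
      (fun w : ℝ => Complex.exp (-y * (w:ℂ)^2)),
      glasser_image ha hc, Measure.restrict_univ]
    exact integral_gaussian_complex hy

private lemma reflect_deriv {a c : ℝ} (ha : 0 < a) (u : ℝ) (hu : u ∈ Ioi (0:ℝ)) :
    HasDerivWithinAt (fun u : ℝ => c/(a*u)) ((c/a) * -(u^2)⁻¹) (Ioi 0) u := by
  have hu0 : u ≠ 0 := (mem_Ioi.1 hu).ne'
  have h2 := (hasDerivAt_inv hu0).const_mul (c/a)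
  have hfe : (fun u : ℝ => c/(a*u)) = (fun u : ℝ => (c/a) * u⁻¹) := by
    funext v; field_simp
  rw [hfe]
  exact h2.hasDerivWithinAt

private lemma reflect_inj {a c : ℝ} (ha : 0 < a) (hc : 0 < c) :
    InjOn (fun u : ℝ => c/(a*u)) (Ioi 0) := by
  intro u hu v hv h
  have hu0 : (0:ℝ) < u := mem_Ioi.1 hu
  have hv0 : (0:ℝ) < v := mem_Ioi.1 hv
  simp only at h
  field_simp at h
  exact h.symm

private lemma reflect_image {a c : ℝ} (ha : 0 < a) (hc : 0 < c) :
    (fun u : ℝ => c/(a*u)) '' (Ioi 0) = Ioi 0 := by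
  ext v
  constructor
  · rintro ⟨u, hu, rfl⟩
    have hu0 : (0:ℝ) < u := mem_Ioi.1 hu
    exact mem_Ioi.2 (by positivity)
  · intro hv
    have hv0 : (0:ℝ) < v := mem_Ioi.1 hv
    refine ⟨c/(a*v), mem_Ioi.2 (by positivity), ?_⟩
    field_simp

private lemma glasser_B {y : ℂ} (hy : 0 < y.re) {a c : ℝ} (ha : 0 < a) (hc : 0 < c) :
    IntegrableOn (fun u : ℝ => ((u^2)⁻¹ : ℝ) •
        Complex.exp (-y * (((a*u - c/u : ℝ)):ℂ)^2)) (Ioi 0) volume ∧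
    ∫ u in Ioi (0:ℝ), ((u^2)⁻¹ : ℝ) • Complex.exp (-y * (((a*u - c/u : ℝ)):ℂ)^2)
      = (2*c:ℝ)⁻¹ • ((π:ℂ)/y) ^ (1/2:ℂ) := by
  set G : ℝ → ℂ := fun u => Complex.exp (-y * (((a*u - c/u : ℝ)):ℂ)^2) with hG
  obtain ⟨hABi, hAB⟩ := glasser_combined hy ha hc
  have hGm : AEStronglyMeasurable G (volume.restrict (Ioi 0)) := by
    apply Measurable.aestronglyMeasurable
    apply Complex.measurable_exp.comp
    apply Measurable.mul measurable_const
    apply Measurable.pow _ measurable_const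
    exact Complex.measurable_ofReal.comp
      ((measurable_const.mul measurable_id).sub (measurable_const.div measurable_id))
  have hCi : IntegrableOn (fun u : ℝ => ((u^2)⁻¹ : ℝ) • G u) (Ioi 0) volume := by
    apply Integrable.mono (hABi.smul (c⁻¹ : ℝ))
    · exact (Measurable.aestronglyMeasurable (measurable_id.pow_const 2).inv).smul hGm
    · filter_upwards [ae_restrict_mem measurableSet_Ioi] with u hu
      have hu0 : (0:ℝ) < u := mem_Ioi.1 hu
      simp only [Pi.smul_apply, norm_smul, Real.norm_eq_abs, abs_abs]
      rw [_root_.abs_of_nonneg (by positivity : (0:ℝ) ≤ (u^2)⁻¹),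
        _root_.abs_of_nonneg (by positivity : (0:ℝ) ≤ c⁻¹),
        _root_.abs_of_pos (by positivity : (0:ℝ) < a + c/u^2)]
      have : (u^2)⁻¹ ≤ c⁻¹ * (a + c/u^2) := by
        rw [div_eq_mul_inv c]
        have h1 : c⁻¹ * (a + c * (u^2)⁻¹) = c⁻¹*a + (u^2)⁻¹ := by field_simp
        rw [h1]
        have : (0:ℝ) < c⁻¹*a := by positivity
        linarith
      calc (u^2)⁻¹ * ‖G u‖ ≤ (c⁻¹ * (a + c/u^2)) * ‖G u‖ := by
            exact mul_le_mul_of_nonneg_right this (norm_nonneg _)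
        _ = c⁻¹ * ((a + c/u^2) * ‖G u‖) := by ring
        _ = c⁻¹ * (|a + c/u^2| * ‖Complex.exp (-y * (((a*u - c/u : ℝ)):ℂ)^2)‖) := by
            rw [_root_.abs_of_pos (by positivity : (0:ℝ) < a + c/u^2)]
        _ = c⁻¹ * ((a + c/u^2) * ‖Complex.exp (-y * (((a*u - c/u : ℝ)):ℂ)^2)‖) := by
            rw [_root_.abs_of_pos (by positivity : (0:ℝ) < a + c/u^2)]
  have hGi : IntegrableOn G (Ioi 0) volume := by
    apply Integrable.mono (hABi.smul (a⁻¹ : ℝ)) hGm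
    filter_upwards [ae_restrict_mem measurableSet_Ioi] with u hu
    have hu0 : (0:ℝ) < u := mem_Ioi.1 hu
    simp only [Pi.smul_apply, norm_smul, Real.norm_eq_abs, abs_abs]
    rw [_root_.abs_of_nonneg (by positivity : (0:ℝ) ≤ a⁻¹),
      _root_.abs_of_pos (by positivity : (0:ℝ) < a + c/u^2)]
    have hGu : ‖G u‖ = ‖Complex.exp (-y * (((a*u - c/u : ℝ)):ℂ)^2)‖ := rfl
    rw [← hGu]
    have h1 : (1:ℝ) ≤ a⁻¹ * (a + c/u^2) := by
      rw [mul_add, inv_mul_cancel₀ ha.ne']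
      have : (0:ℝ) ≤ a⁻¹ * (c/u^2) := by positivity
      linarith
    nlinarith [norm_nonneg (G u)]
  set A := ∫ u in Ioi (0:ℝ), G u with hA
  set C := ∫ u in Ioi (0:ℝ), ((u^2)⁻¹ : ℝ) • G u with hC
  have heq : EqOn (fun u : ℝ => |a + c/u^2| • G u)
      (fun u : ℝ => a • G u + c • (((u^2)⁻¹ : ℝ) • G u)) (Ioi 0) := by
    intro u hu
    have hu0 : (0:ℝ) < u := mem_Ioi.1 hu
    simp only
    rw [_root_.abs_of_pos (by positivity : (0:ℝ) < a + c/u^2), smul_smul, ← add_smul,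
      div_eq_mul_inv]
  have hsplit : a • A + c • C = ((π:ℂ)/y) ^ (1/2:ℂ) := by
    have h1 : IntegrableOn (fun u : ℝ => a • G u) (Ioi 0) volume := hGi.smul (a:ℝ)
    have h2 : IntegrableOn (fun u : ℝ => c • (((u^2)⁻¹:ℝ) • G u)) (Ioi 0) volume :=
      hCi.smul (c:ℝ)
    rw [← hAB, setIntegral_congr_fun measurableSet_Ioi heq,
      integral_add h1 h2, integral_smul, integral_smul]
  have hrefl : A = (c/a : ℝ) • C := by
    have h1 := integral_image_eq_integral_abs_deriv_smul measurableSet_Ioi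
      (fun u hu => reflect_deriv ha u hu) (reflect_inj ha hc) G
    rw [reflect_image ha hc] at h1
    calc A = ∫ u in Ioi (0:ℝ), |c/a * -(u^2)⁻¹| • G (c/(a*u)) := h1
    _ = ∫ u in Ioi (0:ℝ), (c/a : ℝ) • (((u^2)⁻¹:ℝ) • G u) := by
        apply setIntegral_congr_fun measurableSet_Ioi
        intro u hu
        have hu0 : (0:ℝ) < u := mem_Ioi.1 hu
        have habs : |c/a * -(u^2)⁻¹| = (c/a) * (u^2)⁻¹ := by
          rw [abs_mul, abs_neg, _root_.abs_of_pos (by positivity : (0:ℝ) < c/a),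
            _root_.abs_of_nonneg (by positivity : (0:ℝ) ≤ (u^2)⁻¹)]
        have harg : a*(c/(a*u)) - c/(c/(a*u)) = -(a*u - c/u) := by field_simp; ring
        have hGval : G (c/(a*u)) = G u := by
          rw [hG]
          simp only
          rw [harg, Complex.ofReal_neg, neg_sq]
        simp only
        rw [habs, hGval, smul_smul]
    _ = (c/a : ℝ) • C := by rw [integral_smul, hC]
  refine ⟨hCi, ?_⟩
  have h2c : (2*c:ℝ) ≠ 0 := by positivity
  have hfin : ((π:ℂ)/y) ^ (1/2:ℂ) = (2*c:ℝ) • C := by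
    rw [← hsplit, hrefl, smul_smul, ← add_smul]
    congr 1
    field_simp
    ring
  rw [hfin, smul_smul, inv_mul_cancel₀ h2c, one_smul]
      

private lemma sq_deriv (u : ℝ) (hu : u ∈ Ioi (0:ℝ)) :
    HasDerivWithinAt (fun u : ℝ => u^2) (2*u) (Ioi 0) u := by
  simpa using (hasDerivAt_pow 2 u).hasDerivWithinAt

private lemma sq_inj : InjOn (fun u : ℝ => u^2) (Ioi 0) := by
  intro u hu v hv h
  simp only at h
  rw [← Real.sqrt_sq (mem_Ioi.1 hu).le, ← Real.sqrt_sq (mem_Ioi.1 hv).le, h]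

private lemma sq_image : (fun u : ℝ => u^2) '' (Ioi 0) = Ioi 0 := by
  ext v
  constructor
  · rintro ⟨u, hu, rfl⟩
    have : (0:ℝ) < u := mem_Ioi.1 hu
    exact mem_Ioi.2 (by positivity)
  · intro hv
    exact ⟨Real.sqrt v, mem_Ioi.2 (Real.sqrt_pos.2 (mem_Ioi.1 hv)),
      Real.sq_sqrt (mem_Ioi.1 hv).le⟩

private lemma subordination {x : ℝ} (hx : 0 < x) {y : ℂ} (hy : 0 < y.re) :
    IntegrableOn (fun r : ℝ => Complex.exp (-y * (((r * x : ℝ):ℂ) + 1 / (4 * (r:ℂ)))) *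
        ((r ^ (-(3:ℝ)/2) : ℝ) : ℂ)) (Ioi 0) volume ∧
    ∫ r in Ioi (0:ℝ), Complex.exp (-y * (((r * x : ℝ):ℂ) + 1 / (4 * (r:ℂ)))) *
        ((r ^ (-(3:ℝ)/2) : ℝ) : ℂ)
      = 2 * Complex.exp (-y * ((Real.sqrt x : ℝ) : ℂ)) * ((π:ℂ)/y) ^ (1/2:ℂ) := by
  set a := Real.sqrt x with ha'
  have ha : 0 < a := Real.sqrt_pos.2 hx
  have hc : (0:ℝ) < 1/2 := by norm_num
  set F : ℝ → ℂ := fun r => Complex.exp (-y * (((r * x : ℝ):ℂ) + 1 / (4 * (r:ℂ)))) *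
      ((r ^ (-(3:ℝ)/2) : ℝ) : ℂ) with hF
  obtain ⟨hBi, hB⟩ := glasser_B hy ha hc
  have key : ∀ u ∈ Ioi (0:ℝ), |2*u| • F (u^2)
      = (2 * Complex.exp (-y * ((a:ℝ):ℂ))) •
        (((u^2)⁻¹ : ℝ) • Complex.exp (-y * (((a*u - (1/2)/u : ℝ)):ℂ)^2)) := by
    intro u hu
    have hu0 : (0:ℝ) < u := mem_Ioi.1 hu
    have hu0' : (u:ℂ) ≠ 0 := by exact_mod_cast hu0.ne'
    have hrpow : ((u^2) ^ (-(3:ℝ)/2) : ℝ) = (u^3)⁻¹ := by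
      rw [← Real.rpow_natCast u 2, ← Real.rpow_mul hu0.le]
      norm_num
    have hreal : u^2 * x + 1/(4*u^2) = a + (a*u - (1/2)/u)^2 := by
      have hax : a^2 = x := Real.sq_sqrt hx.le
      field_simp
      linear_combination (-16*u^4 : ℝ) * hax
    have hexp : -y * (((u^2 * x : ℝ):ℂ) + 1 / (4 * (((u^2 : ℝ)):ℂ)))
        = -y * ((a:ℝ):ℂ) + -y * (((a*u - (1/2)/u : ℝ)):ℂ)^2 := by
      have hcast : ((u^2 * x : ℝ):ℂ) + 1 / (4 * (((u^2 : ℝ)):ℂ))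
          = (((a + (a*u - (1/2)/u)^2) : ℝ) : ℂ) := by
        rw [← hreal]; push_cast; ring
      rw [hcast]; push_cast; ring
    rw [hF]
    simp only
    rw [hrpow, hexp, Complex.exp_add]
    rw [_root_.abs_of_pos (show (0:ℝ) < 2*u by positivity)]
    rw [Complex.real_smul, Complex.real_smul, smul_eq_mul]
    push_cast
    field_simp
  have hsubst := integral_image_eq_integral_abs_deriv_smul measurableSet_Ioi sq_deriv sq_inj F
  rw [sq_image] at hsubst
  constructor
  · have h1 : IntegrableOn F ((fun u : ℝ => u^2) '' (Ioi 0)) volume := by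
      rw [integrableOn_image_iff_integrableOn_abs_deriv_smul measurableSet_Ioi sq_deriv sq_inj F]
      exact MeasureTheory.IntegrableOn.congr_fun
        (hBi.smul (2 * Complex.exp (-y * ((a:ℝ):ℂ))))
        (fun u hu => (key u hu).symm) measurableSet_Ioi
    rwa [sq_image] at h1
  · rw [hsubst, setIntegral_congr_fun measurableSet_Ioi (fun u hu => key u hu), integral_smul, hB]
    norm_num


/-- **Limiting subordination representation of the half-wave multiplier.** For every real
`x > 0` and `t > 0`, each integral (for `ε > 0`) is absolutely convergent and
`lim_{ε→0⁺} (√(ε − it)/(2√π)) ∫₀^∞ e^{(it−ε)(rx + 1/(4r))} r^{-3/2} dr = e^{it√x}`,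
where `√(ε−it) = (ε−it)^{1/2}` is the principal branch of the complex square root. -/
theorem halfwave_subordination_limit (x t : ℝ) (hx : 0 < x) (ht : 0 < t) :
    (∀ ε : ℝ, 0 < ε →
      IntegrableOn
        (fun r : ℝ => Complex.exp ((Complex.I * (t : ℂ) - (ε : ℂ)) * ((r * x : ℝ) + 1 / (4 * r))) *
          ((r ^ (-(3 : ℝ) / 2) : ℝ) : ℂ)) (Set.Ioi 0) volume) ∧
    Tendsto
      (fun ε : ℝ =>
        ((ε : ℂ) - Complex.I * (t : ℂ)) ^ (1 / 2 : ℂ) / (2 * (Real.sqrt π : ℂ)) *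
          ∫ r in Set.Ioi (0 : ℝ),
            Complex.exp ((Complex.I * (t : ℂ) - (ε : ℂ)) * ((r * x : ℝ) + 1 / (4 * r))) *
              ((r ^ (-(3 : ℝ) / 2) : ℝ) : ℂ))
      (𝓝[>] (0 : ℝ))
      (𝓝 (Complex.exp (Complex.I * (t : ℂ) * (Real.sqrt x : ℂ)))) := by
  have key : ∀ ε : ℝ, 0 < ε →
      IntegrableOn
        (fun r : ℝ => Complex.exp ((Complex.I * (t : ℂ) - (ε : ℂ)) * ((r * x : ℝ) + 1 / (4 * r))) *
          ((r ^ (-(3 : ℝ) / 2) : ℝ) : ℂ)) (Set.Ioi 0) volume ∧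
      ((ε : ℂ) - Complex.I * (t : ℂ)) ^ (1 / 2 : ℂ) / (2 * (Real.sqrt π : ℂ)) *
          (∫ r in Set.Ioi (0 : ℝ),
            Complex.exp ((Complex.I * (t : ℂ) - (ε : ℂ)) * ((r * x : ℝ) + 1 / (4 * r))) *
              ((r ^ (-(3 : ℝ) / 2) : ℝ) : ℂ))
        = Complex.exp (-((ε:ℂ) - Complex.I*(t:ℂ)) * ((Real.sqrt x : ℝ):ℂ)) := by
    intro ε hε
    set y : ℂ := (ε:ℂ) - Complex.I*(t:ℂ) with hy'
    have hy : 0 < y.re := by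
      rw [hy']
      simp [Complex.sub_re, Complex.mul_re]
      exact hε
    have hfun : (fun r : ℝ => Complex.exp ((Complex.I * (t : ℂ) - (ε : ℂ)) *
          ((r * x : ℝ) + 1 / (4 * r))) * ((r ^ (-(3 : ℝ) / 2) : ℝ) : ℂ))
        = fun r : ℝ => Complex.exp (-y * (((r*x:ℝ):ℂ) + 1/(4*(r:ℂ)))) *
          ((r ^ (-(3:ℝ)/2):ℝ):ℂ) := by
      funext r
      rw [show Complex.I*(t:ℂ) - (ε:ℂ) = -y by rw [hy']; ring]
    obtain ⟨hi, heq⟩ := subordination hx hy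
    refine ⟨by rw [hfun]; exact hi, ?_⟩
    rw [hfun, heq]
    have hmul := cpow_half_mul hy
    have hsπ : ((Real.sqrt π : ℝ):ℂ) ≠ 0 := by
      exact_mod_cast (Real.sqrt_pos.2 Real.pi_pos).ne'
    rw [div_mul_eq_mul_div, div_eq_iff (by simpa using hsπ : (2 * ((Real.sqrt π : ℝ):ℂ)) ≠ 0)]
    linear_combination (2 * Complex.exp (-y * ((Real.sqrt x:ℝ):ℂ))) * hmul
  refine ⟨fun ε hε => (key ε hε).1, ?_⟩
  have hcont : Tendsto (fun ε : ℝ => Complex.exp (-((ε:ℂ) - Complex.I*(t:ℂ)) *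
      ((Real.sqrt x:ℝ):ℂ))) (𝓝 0)
      (𝓝 (Complex.exp (Complex.I*(t:ℂ)*((Real.sqrt x:ℝ):ℂ)))) := by
    have hc : Continuous (fun ε : ℝ => Complex.exp (-((ε:ℂ) - Complex.I*(t:ℂ)) *
        ((Real.sqrt x:ℝ):ℂ))) := by
      continuity
    have h0 := hc.tendsto 0
    simpa using h0
  exact (hcont.mono_left nhdsWithin_le_nhds).congr'
    (Filter.eventuallyEq_of_mem self_mem_nhdsWithin
      (fun ε hε => ((key ε (mem_Ioi.1 hε)).2).symm))
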